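/- Weighted orthogonality of the fractional-order Bernstein polynomials (Equation (7)). Let γ > 0, let M be a natural number, and let υ, ϑ ∈ {0,…,M}. Then ∫₀¹ B^γ_{υ,M}(t) · B^γ_{ϑ,M}(t) · t^{γ−1} dt = 0 if υ ≠ ϑ, and ∫₀¹ B^γ_{υ,M}(t)² · t^{γ−1} dt = 1/γ. -/

import Mathlib

open MeasureTheory Finset

/-- Fractional-order Bernstein polynomial `B^γ_{υ,M}` (Equation (6)). -/
noncomputable def fobPoly (γ : ℝ) (υ M : ℕ) (t : ℝ) : ℝ :=
  Real.sqrt (1 + 2 * (M : ℝ) - 2 * (υ : ℝ)) * (1 - t ^ γ) ^ (M - υ) *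
    ∑ i ∈ Finset.range (υ + 1),
      (-1 : ℝ) ^ i * (Nat.choose (1 + 2 * M - i) (υ - i) : ℝ) * (Nat.choose υ i : ℝ) *
        t ^ (γ * ((υ - i : ℕ) : ℝ))

section FobAux
open intervalIntegral


private lemma neg_one_pow_sub {k n : ℕ} (h : k ≤ n) :
    (-1 : ℝ) ^ (n - k) = (-1) ^ n * (-1) ^ k := by
  have h1 : (-1 : ℝ) ^ (n - k) * (-1) ^ k = (-1) ^ n := by
    rw [← pow_add, Nat.sub_add_cancel h]
  have h2 : (-1 : ℝ) ^ k * (-1) ^ k = 1 := by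
    rw [← mul_pow]; norm_num
  calc (-1 : ℝ) ^ (n - k) = (-1 : ℝ) ^ (n - k) * ((-1) ^ k * (-1) ^ k) := by rw [h2, mul_one]
    _ = ((-1 : ℝ) ^ (n - k) * (-1) ^ k) * (-1) ^ k := by ring
    _ = (-1) ^ n * (-1) ^ k := by rw [h1]

private lemma S1 (m : ℕ) : ∀ (n r : ℕ),
    ∑ k ∈ range (n + 1), (-1 : ℝ) ^ k * (n.choose k) * ((r + k).choose m)
      = (-1) ^ n * (if n ≤ m then ((r.choose (m - n) : ℕ) : ℝ) else 0) := by
  intro n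
  induction n with
  | zero => intro r; simp
  | succ n ih =>
    intro r
    have key : ∑ k ∈ range (n + 2), (-1 : ℝ) ^ k * ((n+1).choose k) * ((r + k).choose m)
        = (∑ k ∈ range (n + 1), (-1 : ℝ) ^ k * (n.choose k) * ((r + k).choose m))
          - (∑ k ∈ range (n + 1), (-1 : ℝ) ^ k * (n.choose k) * ((r + 1 + k).choose m)) := by
      rw [Finset.sum_range_succ' _ (n + 1)]
      have e1 : ∀ i, (-1 : ℝ) ^ (i+1) * ((n+1).choose (i+1)) * ((r + (i+1)).choose m)
          = -((-1 : ℝ) ^ i * (n.choose i) * ((r + 1 + i).choose m))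
            + (-1 : ℝ) ^ (i+1) * (n.choose (i+1)) * ((r + (i+1)).choose m) := by
        intro i
        rw [Nat.choose_succ_succ]
        have : r + (i + 1) = r + 1 + i := by omega
        rw [this]
        push_cast
        ring
      rw [Finset.sum_congr rfl (fun i _ => e1 i), Finset.sum_add_distrib]
      have e2 : ∑ i ∈ range (n+1), (-((-1 : ℝ) ^ i * (n.choose i) * ((r + 1 + i).choose m)))
          = -(∑ k ∈ range (n + 1), (-1 : ℝ) ^ k * (n.choose k) * ((r + 1 + k).choose m)) := by
        rw [← Finset.sum_neg_distrib]
      have e3 : (∑ i ∈ range (n+1), (-1 : ℝ) ^ (i+1) * (n.choose (i+1)) * ((r + (i+1)).choose m))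
            + (-1 : ℝ) ^ 0 * ((n+1).choose 0) * ((r + 0).choose m)
          = ∑ k ∈ range (n + 1), (-1 : ℝ) ^ k * (n.choose k) * ((r + k).choose m) := by
        have e4 : (-1 : ℝ) ^ 0 * ((n+1).choose 0) * ((r + 0).choose m)
            = (-1 : ℝ) ^ 0 * ((n).choose 0) * ((r + 0).choose m) := by simp
        rw [e4, ← Finset.sum_range_succ' (fun k => (-1 : ℝ) ^ k * (n.choose k) * ((r + k).choose m)) (n+1),
          Finset.sum_range_succ]
        simp
      rw [e2]
      linarith [e3]
    rw [show n + 1 + 1 = n + 2 from rfl, key, ih r, ih (r + 1)]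
    by_cases h1 : n + 1 ≤ m
    · have h0 : n ≤ m := by omega
      rw [if_pos h0, if_pos h0, if_pos h1]
      have hp : m - n = (m - (n+1)) + 1 := by omega
      rw [hp, Nat.choose_succ_succ]
      push_cast
      ring
    · by_cases h2 : n ≤ m
      · have hnm : n = m := by omega
        rw [if_pos h2, if_pos h2, if_neg h1]
        subst hnm
        simp
      · rw [if_neg h2, if_neg h2, if_neg h1]
        ring

/-- The central sum. -/
noncomputable def Gsum (s υ d e : ℕ) : ℝ :=
  ∑ k ∈ range (υ + 1), (-1 : ℝ) ^ k * ((s + k).choose k) * (υ.choose k) *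
    ((k + e).factorial / (k + e + d).factorial)

private lemma Gbase (s υ d : ℕ) (hd : d ≤ s) :
    Gsum s υ d 0 = (-1 : ℝ) ^ υ * ((s - d).factorial / s.factorial) *
      (if υ + d ≤ s then ((s.choose (s - d - υ) : ℕ) : ℝ) else 0) := by
  have hterm : ∀ k, (((s + k).choose k : ℕ) : ℝ) * ((k + 0).factorial / (k + 0 + d).factorial)
      = ((s - d).factorial / s.factorial) * (((s + k).choose (s - d) : ℕ) : ℝ) := by
    intro k
    have hnat1 : (s + k).choose k * k.factorial * s.factorial = (s + k).factorial := by
      have := Nat.choose_mul_factorial_mul_factorial (show k ≤ s + k by omega)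
      simpa [Nat.add_sub_cancel_left, show s + k - k = s by omega] using this
    have hnat2 : (s + k).choose (s - d) * (s - d).factorial * (k + d).factorial
        = (s + k).factorial := by
      have h1 : s - d ≤ s + k := by omega
      have := Nat.choose_mul_factorial_mul_factorial h1
      have h2 : s + k - (s - d) = k + d := by omega
      rwa [h2] at this
    have hf1 : (k.factorial : ℝ) ≠ 0 := by positivity
    have hf2 : ((k + d).factorial : ℝ) ≠ 0 := by positivity
    have hf3 : (s.factorial : ℝ) ≠ 0 := by positivity
    have hc1 : (((s + k).choose k : ℕ) : ℝ) * k.factorial * s.factorial = (s + k).factorial := by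
      exact_mod_cast congrArg (Nat.cast (R := ℝ)) hnat1
    have hc2 : (((s + k).choose (s - d) : ℕ) : ℝ) * (s - d).factorial * (k + d).factorial
        = (s + k).factorial := by
      exact_mod_cast congrArg (Nat.cast (R := ℝ)) hnat2
    rw [show k + 0 = k from rfl]
    field_simp
    nlinarith [hc1, hc2]
  unfold Gsum
  have : ∀ k ∈ range (υ + 1),
      (-1 : ℝ) ^ k * ((s + k).choose k) * (υ.choose k) * ((k + 0).factorial / (k + 0 + d).factorial)
      = ((s - d).factorial / s.factorial) *
          ((-1 : ℝ) ^ k * (υ.choose k) * (((s + k).choose (s - d) : ℕ) : ℝ)) := by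
    intro k _
    linear_combination ((-1 : ℝ) ^ k * (υ.choose k)) * hterm k
  rw [Finset.sum_congr rfl this, ← Finset.mul_sum]
  have := S1 (s - d) υ s
  rw [this]
  have hiff : υ + d ≤ s ↔ υ ≤ s - d := by omega
  by_cases hc : υ + d ≤ s
  · rw [if_pos hc, if_pos (hiff.mp hc)]
    have : s - d - υ = s - d - υ := rfl
    ring
  · rw [if_neg hc, if_neg (fun h => hc (hiff.mpr h))]
    ring

private lemma Grec (s υ d e : ℕ) :
    Gsum s υ d (e + 1) = Gsum s υ d e - d * Gsum s υ (d + 1) e := by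
  unfold Gsum
  rw [Finset.mul_sum, ← Finset.sum_sub_distrib]
  apply Finset.sum_congr rfl
  intro k _
  have hterm : ((k + (e+1)).factorial : ℝ) / (k + (e+1) + d).factorial
      = (k + e).factorial / (k + e + d).factorial
        - d * ((k + e).factorial / (k + e + (d + 1)).factorial) := by
    set x := k + e with hx
    have h1 : k + (e + 1) = x + 1 := by omega
    rw [h1, show x + 1 + d = x + d + 1 by omega, show x + (d + 1) = x + d + 1 by omega]
    have e1 : ((x + 1).factorial : ℝ) = (x + 1) * x.factorial := by
      rw [Nat.factorial_succ]; push_cast; ring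
    have e2 : ((x + d + 1).factorial : ℝ) = (x + d + 1) * (x + d).factorial := by
      rw [Nat.factorial_succ]; push_cast; ring
    have hf1 : ((x + d).factorial : ℝ) ≠ 0 := by positivity
    have hf2 : ((x + d + 1) : ℝ) ≠ 0 := by positivity
    rw [e1, e2]
    field_simp
    ring
  rw [hterm]
  ring

private lemma Gzero (s υ : ℕ) : ∀ e d, s < υ + d → d + e ≤ s → Gsum s υ d e = 0 := by
  intro e
  induction e with
  | zero =>
    intro d h1 h2
    rw [Gbase s υ d (by omega), if_neg (by omega)]
    ring
  | succ e ih =>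
    intro d h1 h2
    rw [Grec, ih d h1 (by omega), ih (d+1) (by omega) (by omega)]
    ring

private lemma Gdiag (s υ : ℕ) (hυ : υ ≤ s) : ∀ e, e ≤ υ →
    Gsum s υ (s - υ) e = (-1 : ℝ) ^ υ * (υ.factorial / s.factorial) := by
  intro e
  induction e with
  | zero =>
    intro _
    rw [Gbase s υ (s - υ) (by omega), if_pos (by omega)]
    rw [show s - (s - υ) - υ = 0 by omega, show s - (s - υ) = υ by omega]
    simp
  | succ e ih =>
    intro he
    rw [Grec, ih (by omega), Gzero s υ e (s - υ + 1) (by omega) (by omega)]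
    ring


private lemma Ibeta : ∀ (q p : ℕ), ∫ x in (0:ℝ)..1, x ^ p * (1 - x) ^ q
    = (p.factorial * q.factorial : ℝ) / (p + q + 1).factorial := by
  intro q
  induction q with
  | zero =>
    intro p
    simp only [pow_zero, mul_one, integral_pow]
    rw [Nat.factorial_succ]
    have h1 : ((p+1 : ℕ) : ℝ) ≠ 0 := by positivity
    have h2 : ((p.factorial : ℕ) : ℝ) ≠ 0 := by positivity
    push_cast
    rw [show p + 0 + 1 = p + 1 from rfl]
    field_simp
    simp
  | succ q ih =>
    intro p
    have hsplit : (∫ x in (0:ℝ)..1, x ^ p * (1 - x) ^ (q+1))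
        = (∫ x in (0:ℝ)..1, x ^ p * (1 - x) ^ q) - ∫ x in (0:ℝ)..1, x ^ (p+1) * (1 - x) ^ q := by
      rw [← intervalIntegral.integral_sub]
      · apply intervalIntegral.integral_congr
        intro x _
        ring
      · exact (Continuous.intervalIntegrable (by fun_prop) _ _)
      · exact (Continuous.intervalIntegrable (by fun_prop) _ _)
    rw [hsplit, ih p, ih (p+1)]
    have e1 : p + 1 + q + 1 = (p + q + 1) + 1 := by omega
    have e2 : p + (q + 1) + 1 = (p + q + 1) + 1 := by omega
    rw [e1, e2, Nat.factorial_succ (p+q+1), Nat.factorial_succ q, Nat.factorial_succ p]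
    have h1 : ((p + q + 1).factorial : ℝ) ≠ 0 := by positivity
    have h2 : ((p+q+1 : ℕ) : ℝ) + 1 ≠ 0 := by positivity
    push_cast
    field_simp
    ring


/-- coefficient -/
noncomputable def cf (M υ i : ℕ) : ℝ :=
  (-1 : ℝ) ^ i * ((Nat.choose (1 + 2 * M - i) (υ - i) : ℕ) : ℝ) * ((Nat.choose υ i : ℕ) : ℝ)

/-- integer-order polynomial -/
noncomputable def Qp (M υ : ℕ) (u : ℝ) : ℝ :=
  Real.sqrt (1 + 2 * (M : ℝ) - 2 * (υ : ℝ)) * (1 - u) ^ (M - υ) *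
    ∑ i ∈ Finset.range (υ + 1), cf M υ i * u ^ (υ - i)

private lemma Qp_cont (M υ : ℕ) : Continuous (Qp M υ) := by
  unfold Qp
  apply Continuous.mul
  · fun_prop
  · exact continuous_finset_sum _ fun i _ => by fun_prop

private lemma inner_eq (M υ ϑ j : ℕ) (hυ : υ ≤ M) (hϑ : ϑ ≤ M) (hj : j ≤ ϑ) :
    ∑ i ∈ range (υ + 1), cf M υ i *
        ((((υ - i) + (ϑ - j)).factorial * (((M - υ) + (M - ϑ)).factorial) : ℝ) /
          ((((υ - i) + (ϑ - j)) + ((M - υ) + (M - ϑ)) + 1).factorial))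
      = (-1 : ℝ) ^ υ * ((((M - υ) + (M - ϑ)).factorial : ℕ) : ℝ) *
          Gsum (2 * M + 1 - υ) υ (2 * M + 1 - υ - ϑ) (ϑ - j) := by
  rw [Gsum, Finset.mul_sum, ← Finset.sum_range_reflect]
  apply Finset.sum_congr rfl
  intro k hk
  have hk' : k ≤ υ := Nat.lt_succ_iff.mp (Finset.mem_range.mp hk)
  simp only [Nat.add_sub_cancel]
  unfold cf
  rw [show υ - (υ - k) = k by omega,
    show 1 + 2 * M - (υ - k) = (2 * M + 1 - υ) + k by omega,
    Nat.choose_symm hk', neg_one_pow_sub hk',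
    show k + (ϑ - j) + ((M - υ) + (M - ϑ)) + 1 = k + (ϑ - j) + (2 * M + 1 - υ - ϑ) by omega]
  push_cast
  ring

private lemma cf_sum (M υ : ℕ) (hυ : υ ≤ M) :
    ∑ j ∈ range (υ + 1), cf M υ j = (-1 : ℝ) ^ υ * Gsum (2 * M + 1 - υ) υ 0 0 := by
  rw [Gsum, Finset.mul_sum, ← Finset.sum_range_reflect]
  apply Finset.sum_congr rfl
  intro k hk
  have hk' : k ≤ υ := Nat.lt_succ_iff.mp (Finset.mem_range.mp hk)
  simp only [Nat.add_sub_cancel]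
  unfold cf
  rw [show υ - (υ - k) = k by omega,
    show 1 + 2 * M - (υ - k) = (2 * M + 1 - υ) + k by omega,
    Nat.choose_symm hk', neg_one_pow_sub hk']
  simp only [add_zero]
  have : ((k.factorial : ℕ) : ℝ) / ((k.factorial : ℕ) : ℝ) = 1 := by
    have : ((k.factorial : ℕ) : ℝ) ≠ 0 := by positivity
    field_simp
  rw [this]
  ring

private lemma Qp_int (M υ ϑ : ℕ) :
    ∫ u in (0:ℝ)..1, Qp M υ u * Qp M ϑ u
      = Real.sqrt (1 + 2 * (M : ℝ) - 2 * (υ : ℝ)) * Real.sqrt (1 + 2 * (M : ℝ) - 2 * (ϑ : ℝ)) *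
        ∑ j ∈ range (ϑ + 1), cf M ϑ j *
          ∑ i ∈ range (υ + 1), cf M υ i *
            ((((υ - i) + (ϑ - j)).factorial * (((M - υ) + (M - ϑ)).factorial) : ℝ) /
              ((((υ - i) + (ϑ - j)) + ((M - υ) + (M - ϑ)) + 1).factorial)) := by
  set sa := Real.sqrt (1 + 2 * (M : ℝ) - 2 * (υ : ℝ)) with hsa
  set sb := Real.sqrt (1 + 2 * (M : ℝ) - 2 * (ϑ : ℝ)) with hsb
  have hmul : ∀ u : ℝ, Qp M υ u * Qp M ϑ u
      = ∑ j ∈ range (ϑ + 1), ∑ i ∈ range (υ + 1),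
          (sa * sb * cf M ϑ j * cf M υ i) *
            (u ^ ((υ - i) + (ϑ - j)) * (1 - u) ^ ((M - υ) + (M - ϑ))) := by
    intro u
    unfold Qp
    rw [← hsa, ← hsb]
    have : (sa * (1 - u) ^ (M - υ) * ∑ i ∈ range (υ + 1), cf M υ i * u ^ (υ - i)) *
        (sb * (1 - u) ^ (M - ϑ) * ∑ j ∈ range (ϑ + 1), cf M ϑ j * u ^ (ϑ - j))
      = (sa * sb * ((1-u) ^ (M - υ) * (1-u) ^ (M - ϑ))) *
        ((∑ j ∈ range (ϑ + 1), cf M ϑ j * u ^ (ϑ - j)) *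
         (∑ i ∈ range (υ + 1), cf M υ i * u ^ (υ - i))) := by ring
    rw [this, Finset.sum_mul_sum, Finset.mul_sum]
    apply Finset.sum_congr rfl
    intro j _
    rw [Finset.mul_sum]
    apply Finset.sum_congr rfl
    intro i _
    rw [pow_add, pow_add]
    ring
  rw [intervalIntegral.integral_congr (g := fun u => ∑ j ∈ range (ϑ + 1), ∑ i ∈ range (υ + 1),
      (sa * sb * cf M ϑ j * cf M υ i) *
        (u ^ ((υ - i) + (ϑ - j)) * (1 - u) ^ ((M - υ) + (M - ϑ)))) (fun u _ => hmul u)]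
  rw [intervalIntegral.integral_finset_sum (fun j _ => by
    apply Continuous.intervalIntegrable
    exact continuous_finset_sum _ fun i _ => by fun_prop)]
  rw [Finset.mul_sum]
  apply Finset.sum_congr rfl
  intro j _
  rw [intervalIntegral.integral_finset_sum (fun i _ => by
    apply Continuous.intervalIntegrable; fun_prop)]
  rw [Finset.mul_sum, Finset.mul_sum]
  apply Finset.sum_congr rfl
  intro i _
  rw [intervalIntegral.integral_const_mul, Ibeta]
  ring

private lemma Qp_orth_ne (M υ ϑ : ℕ) (hυ : υ ≤ M) (hϑ : ϑ ≤ M) (hlt : ϑ < υ) :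
    ∫ u in (0:ℝ)..1, Qp M υ u * Qp M ϑ u = 0 := by
  rw [Qp_int M υ ϑ]
  have hz : ∀ j ∈ range (ϑ + 1), cf M ϑ j *
      ∑ i ∈ range (υ + 1), cf M υ i *
        ((((υ - i) + (ϑ - j)).factorial * (((M - υ) + (M - ϑ)).factorial) : ℝ) /
          ((((υ - i) + (ϑ - j)) + ((M - υ) + (M - ϑ)) + 1).factorial)) = 0 := by
    intro j hj
    have hj' : j ≤ ϑ := Nat.lt_succ_iff.mp (Finset.mem_range.mp hj)
    rw [inner_eq M υ ϑ j hυ hϑ hj',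
      Gzero (2 * M + 1 - υ) υ (ϑ - j) (2 * M + 1 - υ - ϑ) (by omega) (by omega)]
    ring
  rw [Finset.sum_congr rfl hz]
  simp

private lemma Qp_orth_diag (M υ : ℕ) (hυ : υ ≤ M) :
    ∫ u in (0:ℝ)..1, Qp M υ u * Qp M υ u = 1 := by
  rw [Qp_int M υ υ]
  set s := 2 * M + 1 - υ with hs
  have hd : 2 * M + 1 - υ - υ = s - υ := by omega
  have hterm : ∀ j ∈ range (υ + 1), cf M υ j *
      ∑ i ∈ range (υ + 1), cf M υ i *
        ((((υ - i) + (υ - j)).factorial * (((M - υ) + (M - υ)).factorial) : ℝ) /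
          ((((υ - i) + (υ - j)) + ((M - υ) + (M - υ)) + 1).factorial))
      = ((((M - υ) + (M - υ)).factorial : ℕ) : ℝ) * (υ.factorial / s.factorial) * cf M υ j := by
    intro j hj
    have hj' : j ≤ υ := Nat.lt_succ_iff.mp (Finset.mem_range.mp hj)
    rw [inner_eq M υ υ j hυ hυ hj', hd, Gdiag s υ (by omega) (υ - j) (by omega)]
    have h2 : (-1 : ℝ) ^ υ * (-1 : ℝ) ^ υ = 1 := by rw [← mul_pow]; norm_num
    linear_combination (cf M υ j * ((((M - υ) + (M - υ)).factorial : ℕ) : ℝ)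
      * ((υ.factorial : ℝ) / (s.factorial : ℝ))) * h2
  rw [Finset.sum_congr rfl hterm, ← Finset.mul_sum, cf_sum M υ hυ,
    Gbase s υ 0 (by omega), if_pos (by omega)]
  have hs0 : ((s.factorial : ℕ) : ℝ) ≠ 0 := by positivity
  have h1 : (-1 : ℝ) ^ υ * ((-1 : ℝ) ^ υ * (((s - 0).factorial : ℝ) / s.factorial) * ((s.choose (s - 0 - υ) : ℕ) : ℝ))
      = (((s - 0).factorial : ℝ) / s.factorial) * ((s.choose (s - 0 - υ) : ℕ) : ℝ) := by
    have h2 : (-1 : ℝ) ^ υ * (-1 : ℝ) ^ υ = 1 := by rw [← mul_pow]; norm_num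
    linear_combination ((((s - 0).factorial : ℝ) / s.factorial) * ((s.choose (s - 0 - υ) : ℕ) : ℝ)) * h2
  rw [h1]
  have hsq : Real.sqrt (1 + 2 * (M : ℝ) - 2 * (υ : ℝ)) * Real.sqrt (1 + 2 * (M : ℝ) - 2 * (υ : ℝ))
      = ((s - υ : ℕ) : ℝ) := by
    have hcast : ((υ : ℝ)) ≤ (M : ℝ) := by exact_mod_cast hυ
    rw [Real.mul_self_sqrt (by linarith)]
    rw [Nat.cast_sub (by omega)]
    rw [hs, Nat.cast_sub (by omega)]
    push_cast
    ring
  have hq : (M - υ) + (M - υ) = 2 * (M - υ) := by omega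
  rw [hsq, Nat.sub_zero, div_self hs0, show s - υ = 2 * (M - υ) + 1 by omega, hq]
  have hch : (s.choose (2 * (M - υ) + 1)) * (2 * (M - υ) + 1).factorial * υ.factorial = s.factorial := by
    have h1' : 2 * (M - υ) + 1 ≤ s := by omega
    have := Nat.choose_mul_factorial_mul_factorial h1'
    rwa [show s - (2 * (M - υ) + 1) = υ by omega] at this
  have hch' : ((s.choose (2 * (M - υ) + 1) : ℕ) : ℝ) * ((2 * (M - υ) + 1).factorial : ℝ) * (υ.factorial : ℝ) = (s.factorial : ℝ) := by
    exact_mod_cast congrArg (Nat.cast (R := ℝ)) hch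
  have hfac : ((2 * (M - υ) + 1).factorial : ℝ) = ((2 * (M - υ) + 1 : ℕ) : ℝ) * ((2 * (M - υ)).factorial : ℝ) := by
    rw [Nat.factorial_succ]; push_cast; ring
  rw [hfac] at hch'
  push_cast [Nat.cast_sub hυ] at hch' ⊢
  field_simp
  linear_combination hch'

private lemma fob_eq (γ : ℝ) (υ M : ℕ) (t : ℝ) (ht : 0 ≤ t) :
    fobPoly γ υ M t = Qp M υ (t ^ γ) := by
  unfold fobPoly Qp cf
  congr 1
  apply Finset.sum_congr rfl
  intro i _
  rw [Real.rpow_mul ht, Real.rpow_natCast]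

private lemma subst_lemma (γ : ℝ) (hγ : 0 < γ) (g : ℝ → ℝ) (hg : Continuous g) :
    ∫ t in (0:ℝ)..1, g (t ^ γ) * t ^ (γ - 1) = (1 / γ) * ∫ u in (0:ℝ)..1, g u := by
  have hf_cont : ContinuousOn (fun t : ℝ => t ^ γ) (Set.uIcc (0:ℝ) 1) := fun x _ =>
    (Real.continuousAt_rpow_const x γ (Or.inr hγ.le)).continuousWithinAt
  have hderiv : ∀ x ∈ Set.Ioo (min (0:ℝ) 1) (max (0:ℝ) 1),
      HasDerivWithinAt (fun t : ℝ => t ^ γ) (γ * x ^ (γ - 1)) (Set.Ioi x) x := by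
    intro x hx
    simp only [min_def, max_def] at hx
    norm_num at hx
    exact ((Real.hasDerivAt_rpow_const (p := γ) (Or.inl (ne_of_gt hx.1)))).hasDerivWithinAt
  have hg_cont : ContinuousOn g ((fun t : ℝ => t ^ γ) '' Set.Ioo (min (0:ℝ) 1) (max (0:ℝ) 1)) :=
    hg.continuousOn
  have hg1 : IntegrableOn g ((fun t : ℝ => t ^ γ) '' Set.uIcc (0:ℝ) 1) :=
    hg.continuousOn.integrableOn_compact (isCompact_uIcc.image_of_continuousOn hf_cont)
  have hg2 : IntegrableOn (fun x => (γ * x ^ (γ - 1)) • (g ∘ (fun t : ℝ => t ^ γ)) x)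
      (Set.uIcc (0:ℝ) 1) := by
    rw [← intervalIntegrable_iff']
    have h1 : IntervalIntegrable (fun x : ℝ => x ^ (γ - 1)) volume 0 1 :=
      intervalIntegral.intervalIntegrable_rpow' (by linarith)
    have h2 := h1.const_mul γ
    have h3 : ContinuousOn (fun x : ℝ => (g ∘ fun t : ℝ => t ^ γ) x) (Set.uIcc (0:ℝ) 1) :=
      hg.comp_continuousOn hf_cont
    simpa [smul_eq_mul, mul_assoc] using h2.mul_continuousOn h3
  have key := intervalIntegral.integral_comp_smul_deriv''' (a := 0) (b := 1)
    hf_cont hderiv hg_cont hg1 hg2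
  rw [Real.zero_rpow (ne_of_gt hγ), Real.one_rpow] at key
  have hpt : ∀ t : ℝ, g (t ^ γ) * t ^ (γ - 1) = (1 / γ) * ((γ * t ^ (γ - 1)) • (g ∘ fun t : ℝ => t ^ γ) t) := by
    intro t
    simp only [smul_eq_mul, Function.comp]
    field_simp
  rw [intervalIntegral.integral_congr (fun t _ => hpt t), intervalIntegral.integral_const_mul, key]


end FobAux
open intervalIntegral in
/-- Weighted orthogonality of the fractional-order Bernstein polynomials (Equation (7)). -/
theorem fobPoly_orthogonality
    (γ : ℝ) (hγ : 0 < γ) (M : ℕ) (υ ϑ : ℕ) (hυ : υ ≤ M) (hϑ : ϑ ≤ M) :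
    (∫ t in (0 : ℝ)..1, fobPoly γ υ M t * fobPoly γ ϑ M t * t ^ (γ - 1))
      = if υ = ϑ then 1 / γ else 0 := by
  have hcong : ∀ t ∈ Set.uIcc (0:ℝ) 1,
      fobPoly γ υ M t * fobPoly γ ϑ M t * t ^ (γ - 1)
        = (fun u => Qp M υ u * Qp M ϑ u) (t ^ γ) * t ^ (γ - 1) := by
    intro t ht
    rw [Set.uIcc_of_le (by norm_num)] at ht
    rw [fob_eq γ υ M t ht.1, fob_eq γ ϑ M t ht.1]
  rw [intervalIntegral.integral_congr hcong,
    subst_lemma γ hγ (fun u => Qp M υ u * Qp M ϑ u) ((Qp_cont M υ).mul (Qp_cont M ϑ))]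
  by_cases h : υ = ϑ
  · subst h
    rw [if_pos rfl, Qp_orth_diag M υ hυ, mul_one]
  · rw [if_neg h]
    rcases Nat.lt_or_ge ϑ υ with hlt | hge
    · rw [Qp_orth_ne M υ ϑ hυ hϑ hlt, mul_zero]
    · have hlt : υ < ϑ := by omega
      have hswap : (∫ u in (0:ℝ)..1, Qp M υ u * Qp M ϑ u)
          = ∫ u in (0:ℝ)..1, Qp M ϑ u * Qp M υ u := by
        apply intervalIntegral.integral_congr
        intro u _
        ring
      rw [hswap, Qp_orth_ne M ϑ υ hϑ hυ hlt, mul_zero]
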